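/- Fix an ordinal ξ < 𝔠. Suppose given: (i) a family {𝔅_α : α < ξ} of algebras of subsets of ω, each containing all finite subsets of ω and of cardinality at most max(|ξ|, ℵ₀); and (ii) a family {(M_α, M′_α) : α < ξ} of pairs of subsets of M₁(P(ω)) such that for every α < ξ the pair (M_α, M′_α) is not 𝔅_α-separated. Then for every almost disjoint family 𝒵 of infinite subsets of ω with |𝒵| = 𝔠 there exists Z ∈ 𝒵 such that for every α < ξ the pair (M_α, M′_α) is not 𝔅_α[Z]-separated. -/

import Mathlib

/-- `𝔄` is an algebra of subsets of `S`: it contains `S`, and is closed under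
complements, finite unions and finite intersections. -/
def IsSetAlgebraOn {S : Type*} (𝔄 : Set (Set S)) : Prop :=
  Set.univ ∈ 𝔄 ∧ (∀ A ∈ 𝔄, Aᶜ ∈ 𝔄) ∧ (∀ A ∈ 𝔄, ∀ B ∈ 𝔄, A ∪ B ∈ 𝔄) ∧
    (∀ A ∈ 𝔄, ∀ B ∈ 𝔄, A ∩ B ∈ 𝔄)

/-- `m` is finitely additive on the algebra `𝔄` of subsets of `S`. -/
def FinAddOn {S : Type*} (𝔄 : Set (Set S)) (m : Set S → ℝ) : Prop :=
  ∀ A ∈ 𝔄, ∀ B ∈ 𝔄, Disjoint A B → m (A ∪ B) = m A + m B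

/-- `m` has variation norm `‖m‖ = |m|(S) ≤ 1` on the algebra `𝔄`. -/
def VarLeOne {S : Type*} (𝔄 : Set (Set S)) (m : Set S → ℝ) : Prop :=
  ∀ B ∈ 𝔄, |m B| + |m Bᶜ| ≤ 1

/-- `M₁(P(S))`: the finitely additive measures of norm at most `1` on the full power
set algebra of `S`. -/
def M1full (S : Type*) : Set (Set S → ℝ) :=
  {m | FinAddOn (Set.univ : Set (Set S)) m ∧ VarLeOne (Set.univ : Set (Set S)) m}

/-- The pair `(M, M')` is `𝔅`-separated: there are `ε > 0` and finitely many sets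
`B₁, …, B_n ∈ 𝔅` such that for every `(μ, μ') ∈ M × M'` there is `i ≤ n` with
`|μ(B_i) − μ'(B_i)| ≥ ε`. -/
def SeparatedBy {S : Type*} (𝔅 : Set (Set S)) (M M' : Set (Set S → ℝ)) : Prop :=
  ∃ ε > (0 : ℝ), ∃ n : ℕ, 0 < n ∧ ∃ B : Fin n → Set S, (∀ i, B i ∈ 𝔅) ∧
    ∀ m ∈ M, ∀ m' ∈ M', ∃ i, ε ≤ |m (B i) - m' (B i)|

/-- Membership in the algebra of sets generated by a family `G` of subsets of `S`. -/
inductive genAlgMem {S : Type*} (G : Set (Set S)) : Set S → Prop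
  | base {A : Set S} : A ∈ G → genAlgMem G A
  | empty : genAlgMem G ∅
  | compl {A : Set S} : genAlgMem G A → genAlgMem G Aᶜ
  | union {A B : Set S} : genAlgMem G A → genAlgMem G B → genAlgMem G (A ∪ B)

/-- The algebra of subsets of `S` generated by a family `G`. -/
def genAlg {S : Type*} (G : Set (Set S)) : Set (Set S) := {A | genAlgMem G A}

set_option linter.unusedTactic false
set_option linter.unreachableTactic false

section helpers
variable {S : Type*}

lemma hm_add {m : Set S → ℝ} (hm : FinAddOn (Set.univ : Set (Set S)) m)
    {A B : Set S} (h : Disjoint A B) : m (A ∪ B) = m A + m B :=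
  hm A (Set.mem_univ _) B (Set.mem_univ _) h

lemma hm_split {m : Set S → ℝ} (hm : FinAddOn (Set.univ : Set (Set S)) m)
    (A Z : Set S) : m A = m (A ∩ Z) + m (A ∩ Zᶜ) := by
  have h : Disjoint (A ∩ Z) (A ∩ Zᶜ) :=
    Disjoint.mono inf_le_right inf_le_right disjoint_compl_right
  have := hm_add hm h
  rwa [Set.inter_union_compl] at this

lemma hm_union_finset {m : Set S → ℝ} (hm : FinAddOn (Set.univ : Set (Set S)) m)
    {ι' : Type*} [DecidableEq ι'] (s : Finset ι') (A : ι' → Set S)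
    (hd : ∀ i ∈ s, ∀ j ∈ s, i ≠ j → Disjoint (A i) (A j)) :
    m (⋃ i ∈ s, A i) = ∑ i ∈ s, m (A i) := by
  induction s using Finset.induction_on with
  | empty =>
    have hd0 : Disjoint (∅ : Set S) (∅ : Set S) := by simp
    have h0 := hm_add hm hd0
    simp only [Set.union_empty] at h0
    have h0' : m (∅ : Set S) = 0 := by linarith
    simp [h0']
  | @insert a s' hx ih =>
    rw [Finset.set_biUnion_insert, Finset.sum_insert hx]
    have hdis : Disjoint (A a) (⋃ i ∈ s', A i) := by
      refine Set.disjoint_iUnion₂_right.mpr fun i hi => ?_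
      exact hd a (Finset.mem_insert_self _ _) i (Finset.mem_insert_of_mem hi)
        (by rintro rfl; exact hx hi)
    rw [hm_add hm hdis, ih fun i hi j hj hij =>
      hd i (Finset.mem_insert_of_mem hi) j (Finset.mem_insert_of_mem hj) hij]

lemma sum_abs_le_two {m : Set S → ℝ} (hm : FinAddOn (Set.univ : Set (Set S)) m)
    (hv : VarLeOne (Set.univ : Set (Set S)) m) {ι' : Type*} [DecidableEq ι']
    (s : Finset ι') (A : ι' → Set S)
    (hd : ∀ i ∈ s, ∀ j ∈ s, i ≠ j → Disjoint (A i) (A j)) :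
    ∑ i ∈ s, |m (A i)| ≤ 2 := by
  classical
  set P := s.filter (fun i => 0 ≤ m (A i)) with hP
  set Q := s.filter (fun i => ¬ 0 ≤ m (A i)) with hQ
  have hPs : P ⊆ s := Finset.filter_subset _ _
  have hQs : Q ⊆ s := Finset.filter_subset _ _
  have hmP : m (⋃ i ∈ P, A i) = ∑ i ∈ P, m (A i) :=
    hm_union_finset hm P A fun i hi j hj hij => hd i (hPs hi) j (hPs hj) hij
  have hmQ : m (⋃ i ∈ Q, A i) = ∑ i ∈ Q, m (A i) :=
    hm_union_finset hm Q A fun i hi j hj hij => hd i (hQs hi) j (hQs hj) hij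
  have h1 : |m (⋃ i ∈ P, A i)| ≤ 1 := by
    have := hv (⋃ i ∈ P, A i) (Set.mem_univ _)
    have := abs_nonneg (m (⋃ i ∈ P, A i)ᶜ)
    linarith [abs_nonneg (m ((⋃ i ∈ P, A i)ᶜ)), hv (⋃ i ∈ P, A i) (Set.mem_univ _)]
  have h2 : |m (⋃ i ∈ Q, A i)| ≤ 1 := by
    linarith [abs_nonneg (m ((⋃ i ∈ Q, A i)ᶜ)), hv (⋃ i ∈ Q, A i) (Set.mem_univ _)]
  have hsplit : ∑ i ∈ s, |m (A i)| = ∑ i ∈ P, m (A i) + ∑ i ∈ Q, (- m (A i)) := by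
    rw [← Finset.sum_filter_add_sum_filter_not s (fun i => 0 ≤ m (A i)) (fun i => |m (A i)|)]
    congr 1
    · exact Finset.sum_congr rfl fun i hi => abs_of_nonneg (Finset.mem_filter.mp hi).2
    · exact Finset.sum_congr rfl fun i hi =>
        abs_of_neg (lt_of_not_ge (Finset.mem_filter.mp hi).2)
  rw [hsplit]
  have := abs_le.mp h1
  have := abs_le.mp h2
  rw [hmP] at h1
  rw [hmQ] at h2
  have h1' := (abs_le.mp h1).2
  have h2' := (abs_le.mp h2).1
  have : ∑ i ∈ Q, (- m (A i)) = - ∑ i ∈ Q, m (A i) := by rw [Finset.sum_neg_distrib]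
  rw [this]
  linarith

lemma genAlg_repr {𝔅 : Set (Set S)} (h : IsSetAlgebraOn 𝔅) (Z : Set S) {A : Set S}
    (hA : A ∈ genAlg (𝔅 ∪ {Z})) :
    ∃ B' ∈ 𝔅, ∃ B'' ∈ 𝔅, A = (B' ∩ Z) ∪ (B'' ∩ Zᶜ) := by
  have hempty : (∅ : Set S) ∈ 𝔅 := by
    have := h.2.1 Set.univ h.1
    rwa [Set.compl_univ] at this
  induction hA with
  | base hA =>
    rename_i A
    rcases hA with hA | hA
    · exact ⟨A, hA, A, hA, by rw [Set.inter_union_compl]⟩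
    · rcases hA with rfl
      exact ⟨Set.univ, h.1, ∅, hempty, by simp⟩
  | empty => exact ⟨∅, hempty, ∅, hempty, by simp⟩
  | compl _ ih =>
    obtain ⟨B', hB', B'', hB'', rfl⟩ := ih
    refine ⟨B'ᶜ, h.2.1 _ hB', B''ᶜ, h.2.1 _ hB'', ?_⟩
    ext x; by_cases hx : x ∈ Z <;> simp [hx]
  | union _ _ ih₁ ih₂ =>
    obtain ⟨B', hB', B'', hB'', rfl⟩ := ih₁
    obtain ⟨C', hC', C'', hC'', rfl⟩ := ih₂
    refine ⟨B' ∪ C', h.2.2.1 _ hB' _ hC', B'' ∪ C'', h.2.2.1 _ hB'' _ hC'', ?_⟩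
    ext x; by_cases hx : x ∈ Z <;> simp [hx] <;> tauto

end helpers

lemma not_sep_elim {𝔅 : Set (Set ℕ)} {M M' : Set (Set ℕ → ℝ)}
    (h : ¬ SeparatedBy 𝔅 M M') (halg : IsSetAlgebraOn 𝔅)
    {ε : ℝ} (hε : 0 < ε) {κ : Type*} [Fintype κ] (C : κ → Set ℕ)
    (hC : ∀ i, C i ∈ 𝔅) :
    ∃ μ ∈ M, ∃ μ' ∈ M', ∀ i, |μ (C i) - μ' (C i)| < ε := by
  classical
  set nc := Fintype.card κ with hnc
  set e := (Fintype.equivFin κ) with he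
  set C' : Fin (nc + 1) → Set ℕ := fun i =>
    if h : (i : ℕ) < nc then C (e.symm ⟨i, h⟩) else Set.univ with hC'
  have hmem : ∀ i, C' i ∈ 𝔅 := by
    intro i
    rw [hC']
    dsimp only
    split
    · exact hC _
    · exact halg.1
  have hnot : ¬ ∀ m ∈ M, ∀ m' ∈ M', ∃ i, ε ≤ |m (C' i) - m' (C' i)| := by
    intro hc
    exact h ⟨ε, hε, nc + 1, Nat.succ_pos _, C', hmem, hc⟩
  push_neg at hnot
  obtain ⟨μ, hμ, μ', hμ', hall⟩ := hnot
  refine ⟨μ, hμ, μ', hμ', fun i => ?_⟩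
  have h2 := hall ⟨(e i : ℕ), Nat.lt_succ_of_lt (e i).isLt⟩
  have h3 : C' ⟨(e i : ℕ), Nat.lt_succ_of_lt (e i).isLt⟩ = C i := by
    rw [hC']
    dsimp only
    rw [dif_pos (e i).isLt]
    congr 1
    simp
  rwa [h3] at h2

open Cardinal in
lemma cardT_lt {ι : Type} (hι : #ι < continuum) (𝔅U : Set (Set ℕ))
    (hU : #↥𝔅U ≤ max #ι ℵ₀) :
    #(ι × ℕ × List (↥𝔅U × ↥𝔅U)) < continuum := by
  set kk := max #ι ℵ₀ with hkk
  have hkinf : ℵ₀ ≤ kk := le_max_right _ _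
  have hklt : kk < continuum := max_lt hι aleph0_lt_continuum
  have h1 : #(↥𝔅U × ↥𝔅U) ≤ kk := by
    rw [mk_prod]
    simp only [lift_id]
    calc #↥𝔅U * #↥𝔅U ≤ kk * kk := mul_le_mul' hU hU
    _ = kk := mul_eq_self hkinf
  have h2 : #(List (↥𝔅U × ↥𝔅U)) ≤ kk := by
    calc #(List (↥𝔅U × ↥𝔅U)) ≤ max ℵ₀ #(↥𝔅U × ↥𝔅U) := mk_list_le_max _
    _ ≤ kk := max_le hkinf h1
  have h3 : #(ℕ × List (↥𝔅U × ↥𝔅U)) ≤ kk := by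
    rw [mk_prod]
    simp only [lift_id, mk_nat]
    calc ℵ₀ * #(List (↥𝔅U × ↥𝔅U)) ≤ kk * kk := mul_le_mul' hkinf h2
    _ = kk := mul_eq_self hkinf
  calc #(ι × ℕ × List (↥𝔅U × ↥𝔅U)) = #ι * #(ℕ × List (↥𝔅U × ↥𝔅U)) := by
        rw [mk_prod]; simp
  _ ≤ kk * kk := mul_le_mul' (le_max_left _ _) h3
  _ = kk := mul_eq_self hkinf
  _ < continuum := hklt

open Cardinal in
/-- Haydon's lemma, measure-theoretic version. Given fewer than `𝔠` many algebras
`𝔅_α` of subsets of `ω` (each containing all finite sets and of size at most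
`max(|index|, ℵ₀)`) together with pairs `(M_α, M'_α)` of subsets of `M₁(P(ω))` that are
not `𝔅_α`-separated, then for every almost disjoint family `𝒵` of infinite subsets of
`ω` with `|𝒵| = 𝔠` there is `Z ∈ 𝒵` such that no pair `(M_α, M'_α)` is
`𝔅_α[Z]`-separated. -/
theorem statement14 (ι : Type) (hι : #ι < continuum)
    (𝔅 : ι → Set (Set ℕ)) (halg : ∀ α, IsSetAlgebraOn (𝔅 α))
    (hfin : ∀ α, ∀ F : Set ℕ, F.Finite → F ∈ 𝔅 α)
    (hcard : ∀ α, #↥(𝔅 α) ≤ max (#ι) ℵ₀)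
    (M M' : ι → Set (Set ℕ → ℝ))
    (hM : ∀ α, M α ⊆ M1full ℕ) (hM' : ∀ α, M' α ⊆ M1full ℕ)
    (hnsep : ∀ α, ¬ SeparatedBy (𝔅 α) (M α) (M' α))
    (𝒵 : Set (Set ℕ)) (h𝒵inf : ∀ Z ∈ 𝒵, Z.Infinite)
    (h𝒵ad : ∀ Z ∈ 𝒵, ∀ Z' ∈ 𝒵, Z ≠ Z' → (Z ∩ Z').Finite)
    (h𝒵card : #↥𝒵 = continuum) :
    ∃ Z ∈ 𝒵, ∀ α, ¬ SeparatedBy (genAlg (𝔅 α ∪ {Z})) (M α) (M' α) := by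
  classical
  by_contra hcon
  push_neg at hcon
  set 𝔅U : Set (Set ℕ) := ⋃ α, 𝔅 α with h𝔅U
  -- Step A: choose data for each z
  have key : ∀ z : ↥𝒵, ∃ α : ι, ∃ k : ℕ, 0 < k ∧ ∃ L : List (↥𝔅U × ↥𝔅U),
      (∀ p ∈ L, ((p.1 : Set ℕ) ∈ 𝔅 α ∧ (p.2 : Set ℕ) ∈ 𝔅 α)) ∧ 0 < L.length ∧
      ∀ m ∈ M α, ∀ m' ∈ M' α, ∃ i : Fin L.length,
        (1 : ℝ)/k ≤ |m (((L.get i).1 : Set ℕ) ∩ (z : Set ℕ) ∪ ((L.get i).2 : Set ℕ) ∩ (z : Set ℕ)ᶜ)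
          - m' (((L.get i).1 : Set ℕ) ∩ (z : Set ℕ) ∪ ((L.get i).2 : Set ℕ) ∩ (z : Set ℕ)ᶜ)| := by
    rintro ⟨Z, hZ⟩
    obtain ⟨α, ε, hε, n, hn, B, hB, hsep⟩ := hcon Z hZ
    have hrep : ∀ i : Fin n, ∃ B' ∈ 𝔅 α, ∃ B'' ∈ 𝔅 α, B i = (B' ∩ Z) ∪ (B'' ∩ Zᶜ) :=
      fun i => genAlg_repr (halg α) Z (hB i)
    choose B' hB' B'' hB'' hEq using hrep
    obtain ⟨nn, hnn⟩ := exists_nat_one_div_lt hε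
    refine ⟨α, nn + 1, Nat.succ_pos _, ?_⟩
    have hmemU : ∀ A ∈ 𝔅 α, A ∈ 𝔅U := fun A hA => Set.mem_iUnion.mpr ⟨α, hA⟩
    set f : Fin n → ↥𝔅U × ↥𝔅U :=
      fun i => (⟨B' i, hmemU _ (hB' i)⟩, ⟨B'' i, hmemU _ (hB'' i)⟩) with hf
    refine ⟨List.ofFn f, ?_, ?_, ?_⟩
    · intro p hp
      obtain ⟨i, rfl⟩ := (List.mem_ofFn (f := f) (a := p)).mp hp
      exact ⟨hB' i, hB'' i⟩
    · rw [List.length_ofFn]; exact hn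
    · intro m hm m' hm'
      obtain ⟨i, hi⟩ := hsep m hm m' hm'
      refine ⟨Fin.cast (List.length_ofFn (f := f)).symm i, ?_⟩
      have hget : (List.ofFn f).get (Fin.cast (List.length_ofFn (f := f)).symm i) = f i := by
        simp [List.get_ofFn]
      rw [hget]
      have hcast : ((nn : ℝ) + 1) = ((nn + 1 : ℕ) : ℝ) := by push_cast; ring
      have h1k : (1 : ℝ)/(nn + 1 : ℕ) ≤ ε := by
        rw [← hcast]; exact le_of_lt hnn
      refine le_trans h1k ?_
      have : ((f i).1 : Set ℕ) ∩ Z ∪ ((f i).2 : Set ℕ) ∩ Zᶜ = B i := by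
        rw [hf]; exact (hEq i).symm
      rw [this]
      exact hi
  choose a k hk L hLmem hLlen hLsep using key
  -- Step B: pigeonhole
  have h𝒵ne : Nonempty ↥𝒵 := by
    rw [← Cardinal.mk_ne_zero_iff, h𝒵card]
    exact ne_of_gt (lt_of_lt_of_le aleph0_pos aleph0_le_continuum)
  obtain ⟨z₀⟩ := h𝒵ne
  haveI : Nonempty ι := ⟨a z₀⟩
  haveI hinf𝒵 : Infinite ↥𝒵 := by
    rw [Cardinal.infinite_iff, h𝒵card]; exact aleph0_le_continuum
  have hU : #↥𝔅U ≤ max #ι ℵ₀ := by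
    calc #↥𝔅U ≤ #ι * ⨆ α, #↥(𝔅 α) := mk_iUnion_le _
    _ ≤ (max #ι ℵ₀) * (max #ι ℵ₀) :=
        mul_le_mul' (le_max_left _ _) (ciSup_le' hcard)
    _ = max #ι ℵ₀ := mul_eq_self (le_max_right _ _)
  set d : ↥𝒵 → ι × ℕ × List (↥𝔅U × ↥𝔅U) := fun z => (a z, k z, L z) with hd
  have hlt : #(ι × ℕ × List (↥𝔅U × ↥𝔅U)) < #↥𝒵 := by
    rw [h𝒵card]; exact cardT_lt hι 𝔅U hU
  obtain ⟨t, ht⟩ := Cardinal.exists_infinite_fiber d hlt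
  set α₀ := t.1 with hα₀
  set k₀ := t.2.1 with hk₀
  set L₀ := t.2.2 with hL₀
  have hfib : ∀ z : ↥𝒵, d z = t → a z = α₀ ∧ k z = k₀ ∧ L z = L₀ := by
    intro z hz
    rw [hd] at hz
    rw [Prod.ext_iff, Prod.ext_iff] at hz
    exact ⟨hz.1, hz.2.1, hz.2.2⟩
  haveI := ht
  obtain ⟨⟨w₀, hw₀⟩⟩ : Nonempty ↥(d ⁻¹' {t}) := inferInstance
  obtain ⟨haw₀, hkw₀, hLw₀⟩ := hfib w₀ hw₀
  set n₀ := L₀.length with hn₀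
  have hn₀pos : 0 < n₀ := by rw [hn₀, ← hLw₀]; exact hLlen w₀
  have hk₀pos : 0 < k₀ := by rw [← hkw₀]; exact hk w₀
  set B1 : Fin n₀ → Set ℕ := fun i => ((L₀.get i).1 : Set ℕ) with hB1
  set B2 : Fin n₀ → Set ℕ := fun i => ((L₀.get i).2 : Set ℕ) with hB2
  have hB1mem : ∀ i, B1 i ∈ 𝔅 α₀ ∧ B2 i ∈ 𝔅 α₀ := by
    intro i
    have := hLmem w₀ (L₀.get i) (by rw [hLw₀]; have := List.get_mem L₀ i; simpa using this)
    rw [haw₀] at this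
    exact this
  set ε₀ : ℝ := 1/(k₀ : ℝ) with hε₀
  have hε₀pos : 0 < ε₀ := by
    rw [hε₀]
    positivity
  have hsep₀ : ∀ z : ↥𝒵, d z = t → ∀ m ∈ M α₀, ∀ m' ∈ M' α₀,
      ∃ i : Fin n₀, ε₀ ≤ |m (B1 i ∩ (z : Set ℕ) ∪ B2 i ∩ (z : Set ℕ)ᶜ)
        - m' (B1 i ∩ (z : Set ℕ) ∪ B2 i ∩ (z : Set ℕ)ᶜ)| := by
    intro z hz
    obtain ⟨ha, hk', hL'⟩ := hfib z hz
    have h := hLsep z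
    rw [ha, hk', hL'] at h
    exact h
  -- Step D: pick N distinct elements of the fiber
  set N := 16 * n₀ * k₀ + 1 with hN
  have hNpos : 0 < N := Nat.succ_pos _
  set e := Infinite.natEmbedding ↥(d ⁻¹' {t}) with he
  set g : Fin N → ↥𝒵 := fun j => ((e j.val : ↥(d ⁻¹' {t})) : ↥𝒵) with hg
  have hgfib : ∀ j, d (g j) = t := fun j => (e j.val).2
  have hginj : Function.Injective g := by
    intro j j' hjj
    have := Subtype.coe_injective hjj
    have := e.injective this
    exact Fin.val_injective this
  set W : Fin N → Set ℕ := fun j => ((g j : ↥𝒵) : Set ℕ) with hW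
  have hWinj : Function.Injective W := fun j j' hjj =>
    hginj (Subtype.coe_injective hjj)
  have hWZ : ∀ j, W j ∈ 𝒵 := fun j => (g j).2
  set F : Set ℕ := ⋃ (j : Fin N), ⋃ (j' : Fin N), ⋃ (_ : j ≠ j'), (W j ∩ W j') with hF
  have hFfin : F.Finite := by
    apply Set.finite_iUnion
    intro j
    apply Set.finite_iUnion
    intro j'
    apply Set.finite_iUnion
    intro hjj
    exact h𝒵ad _ (hWZ j) _ (hWZ j') (fun hc => hjj (hWinj hc))
  have hWd : ∀ j j' : Fin N, j ≠ j' → Disjoint (W j ∩ Fᶜ) (W j' ∩ Fᶜ) := by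
    intro j j' hjj
    rw [Set.disjoint_left]
    rintro x ⟨hx1, hx2⟩ ⟨hx3, _⟩
    exact hx2 (Set.mem_iUnion.mpr ⟨j, Set.mem_iUnion.mpr ⟨j',
      Set.mem_iUnion.mpr ⟨hjj, ⟨hx1, hx3⟩⟩⟩⟩)
  -- Step E: apply non-separation
  set C : (Fin n₀ × Fin N × Fin 3) → Set ℕ := fun q =>
    if q.2.2 = (0 : Fin 3) then B2 q.1
    else if q.2.2 = (1 : Fin 3) then B1 q.1 ∩ W q.2.1 ∩ F
    else B2 q.1 ∩ W q.2.1 ∩ F with hC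
  have hCmem : ∀ q, C q ∈ 𝔅 α₀ := by
    intro q
    rw [hC]
    dsimp only
    split
    · exact (hB1mem q.1).2
    split
    · exact hfin α₀ _ (hFfin.subset Set.inter_subset_right)
    · exact hfin α₀ _ (hFfin.subset Set.inter_subset_right)
  obtain ⟨μ, hμM, μ', hμ'M, hsmall⟩ :=
    not_sep_elim (hnsep α₀) (halg α₀) (by positivity : (0:ℝ) < ε₀/8) C hCmem
  obtain ⟨hμa, hμv⟩ := hM α₀ hμM
  obtain ⟨hμ'a, hμ'v⟩ := hM' α₀ hμ'M
  have hs1 : ∀ i : Fin n₀, |μ (B2 i) - μ' (B2 i)| < ε₀/8 := by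
    intro i
    have := hsmall (i, ⟨0, hNpos⟩, 0)
    simpa [hC] using this
  have hs2 : ∀ (i : Fin n₀) (j : Fin N),
      |μ (B1 i ∩ W j ∩ F) - μ' (B1 i ∩ W j ∩ F)| < ε₀/8 := by
    intro i j
    have := hsmall (i, j, 1)
    simpa [hC] using this
  have hs3 : ∀ (i : Fin n₀) (j : Fin N),
      |μ (B2 i ∩ W j ∩ F) - μ' (B2 i ∩ W j ∩ F)| < ε₀/8 := by
    intro i j
    have := hsmall (i, j, 2)
    simpa [hC] using this
  -- the remainder sums
  set R : Fin N → ℝ := fun j => ∑ i : Fin n₀,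
    (|μ (B1 i ∩ W j ∩ Fᶜ)| + |μ' (B1 i ∩ W j ∩ Fᶜ)|
      + |μ (B2 i ∩ W j ∩ Fᶜ)| + |μ' (B2 i ∩ W j ∩ Fᶜ)|) with hR
  have hsum2 : ∀ (X : Fin n₀ → Set ℕ) (m : Set ℕ → ℝ),
      FinAddOn (Set.univ : Set (Set ℕ)) m → VarLeOne (Set.univ : Set (Set ℕ)) m →
      ∀ i, ∑ j : Fin N, |m (X i ∩ W j ∩ Fᶜ)| ≤ 2 := by
    intro X m hma hmv i
    apply sum_abs_le_two hma hmv
    intro j _ j' _ hjj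
    have hsub : ∀ j'' : Fin N, X i ∩ W j'' ∩ Fᶜ ⊆ W j'' ∩ Fᶜ :=
      fun j'' x hx => ⟨hx.1.2, hx.2⟩
    exact Disjoint.mono (hsub j) (hsub j') (hWd j j' hjj)
  have hRsum : ∑ j : Fin N, R j ≤ 8 * (n₀ : ℝ) := by
    rw [hR]
    rw [Finset.sum_comm]
    have : ∀ i : Fin n₀, ∑ j : Fin N,
        (|μ (B1 i ∩ W j ∩ Fᶜ)| + |μ' (B1 i ∩ W j ∩ Fᶜ)|
          + |μ (B2 i ∩ W j ∩ Fᶜ)| + |μ' (B2 i ∩ W j ∩ Fᶜ)|) ≤ 8 := by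
      intro i
      have h1 := hsum2 B1 μ hμa hμv i
      have h2 := hsum2 B1 μ' hμ'a hμ'v i
      have h3 := hsum2 B2 μ hμa hμv i
      have h4 := hsum2 B2 μ' hμ'a hμ'v i
      rw [Finset.sum_add_distrib, Finset.sum_add_distrib, Finset.sum_add_distrib]
      linarith
    calc ∑ i : Fin n₀, ∑ j : Fin N,
        (|μ (B1 i ∩ W j ∩ Fᶜ)| + |μ' (B1 i ∩ W j ∩ Fᶜ)|
          + |μ (B2 i ∩ W j ∩ Fᶜ)| + |μ' (B2 i ∩ W j ∩ Fᶜ)|)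
        ≤ ∑ _i : Fin n₀, (8 : ℝ) := Finset.sum_le_sum fun i _ => this i
    _ = 8 * (n₀ : ℝ) := by simp [mul_comm]
  have hexj : ∃ j : Fin N, R j < ε₀/2 := by
    by_contra hno
    push_neg at hno
    have h1 : (N : ℝ) * (ε₀/2) ≤ ∑ j : Fin N, R j := by
      calc (N : ℝ) * (ε₀/2) = ∑ _j : Fin N, (ε₀/2) := by simp [mul_comm]
      _ ≤ ∑ j : Fin N, R j := Finset.sum_le_sum fun j _ => hno j
    have hNval : (N : ℝ) = 16 * (n₀ : ℝ) * (k₀ : ℝ) + 1 := by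
      rw [hN]; push_cast; ring
    have hk₀r : (1 : ℝ) ≤ (k₀ : ℝ) := by exact_mod_cast hk₀pos
    have hε₀k : ε₀ * (k₀ : ℝ) = 1 := by
      rw [hε₀]; field_simp
    nlinarith [hRsum, h1, hε₀pos]
  obtain ⟨j, hj⟩ := hexj
  obtain ⟨i, hi⟩ := hsep₀ (g j) (hgfib j) μ hμM μ' hμ'M
  -- now compute
  have habs : ∀ x y : ℝ, |x - y| ≤ |x| + |y| := fun x y => by
    rw [sub_eq_add_neg]
    exact (abs_add_le _ _).trans (by rw [abs_neg])
  have hdisj1 : Disjoint (B1 i ∩ W j) (B2 i ∩ (W j)ᶜ) :=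
    Disjoint.mono inf_le_right inf_le_right disjoint_compl_right
  have heqμ : μ (B1 i ∩ W j ∪ B2 i ∩ (W j)ᶜ)
      = μ (B2 i) - μ (B2 i ∩ W j ∩ F) - μ (B2 i ∩ W j ∩ Fᶜ)
        + μ (B1 i ∩ W j ∩ F) + μ (B1 i ∩ W j ∩ Fᶜ) := by
    have e1 := hm_add hμa hdisj1
    have e2 := hm_split hμa (B2 i) (W j)
    have e3 := hm_split hμa (B1 i ∩ W j) F
    have e4 := hm_split hμa (B2 i ∩ W j) F
    linarith
  have heqμ' : μ' (B1 i ∩ W j ∪ B2 i ∩ (W j)ᶜ)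
      = μ' (B2 i) - μ' (B2 i ∩ W j ∩ F) - μ' (B2 i ∩ W j ∩ Fᶜ)
        + μ' (B1 i ∩ W j ∩ F) + μ' (B1 i ∩ W j ∩ Fᶜ) := by
    have e1 := hm_add hμ'a hdisj1
    have e2 := hm_split hμ'a (B2 i) (W j)
    have e3 := hm_split hμ'a (B1 i ∩ W j) F
    have e4 := hm_split hμ'a (B2 i ∩ W j) F
    linarith
  have hWgj : ((g j : ↥𝒵) : Set ℕ) = W j := rfl
  rw [hWgj, heqμ, heqμ'] at hi
  -- bound pieces
  have hterm : |μ (B1 i ∩ W j ∩ Fᶜ)| + |μ' (B1 i ∩ W j ∩ Fᶜ)|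
      + |μ (B2 i ∩ W j ∩ Fᶜ)| + |μ' (B2 i ∩ W j ∩ Fᶜ)| ≤ R j := by
    rw [hR]
    exact Finset.single_le_sum (f := fun i => |μ (B1 i ∩ W j ∩ Fᶜ)| + |μ' (B1 i ∩ W j ∩ Fᶜ)|
      + |μ (B2 i ∩ W j ∩ Fᶜ)| + |μ' (B2 i ∩ W j ∩ Fᶜ)|)
      (fun i _ => by positivity) (Finset.mem_univ i)
  have h1 := hs1 i
  have h2 := hs2 i j
  have h3 := hs3 i j
  have habs1 := abs_sub_abs_le_abs_sub (μ (B1 i ∩ W j ∩ Fᶜ)) (μ' (B1 i ∩ W j ∩ Fᶜ))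
  -- final contradiction via abs bounds
  have hfinal : |(μ (B2 i) - μ (B2 i ∩ W j ∩ F) - μ (B2 i ∩ W j ∩ Fᶜ)
        + μ (B1 i ∩ W j ∩ F) + μ (B1 i ∩ W j ∩ Fᶜ))
      - (μ' (B2 i) - μ' (B2 i ∩ W j ∩ F) - μ' (B2 i ∩ W j ∩ Fᶜ)
        + μ' (B1 i ∩ W j ∩ F) + μ' (B1 i ∩ W j ∩ Fᶜ))| < ε₀ := by
    have e1 : (μ (B2 i) - μ (B2 i ∩ W j ∩ F) - μ (B2 i ∩ W j ∩ Fᶜ)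
        + μ (B1 i ∩ W j ∩ F) + μ (B1 i ∩ W j ∩ Fᶜ))
      - (μ' (B2 i) - μ' (B2 i ∩ W j ∩ F) - μ' (B2 i ∩ W j ∩ Fᶜ)
        + μ' (B1 i ∩ W j ∩ F) + μ' (B1 i ∩ W j ∩ Fᶜ))
      = (μ (B2 i) - μ' (B2 i)) - (μ (B2 i ∩ W j ∩ F) - μ' (B2 i ∩ W j ∩ F))
        + (μ (B1 i ∩ W j ∩ F) - μ' (B1 i ∩ W j ∩ F))
        + (μ (B1 i ∩ W j ∩ Fᶜ) - μ' (B1 i ∩ W j ∩ Fᶜ))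
        - (μ (B2 i ∩ W j ∩ Fᶜ) - μ' (B2 i ∩ W j ∩ Fᶜ)) := by ring
    rw [e1]
    have t1 : |(μ (B1 i ∩ W j ∩ Fᶜ) - μ' (B1 i ∩ W j ∩ Fᶜ))|
        ≤ |μ (B1 i ∩ W j ∩ Fᶜ)| + |μ' (B1 i ∩ W j ∩ Fᶜ)| := habs _ _
    have t2 : |(μ (B2 i ∩ W j ∩ Fᶜ) - μ' (B2 i ∩ W j ∩ Fᶜ))|
        ≤ |μ (B2 i ∩ W j ∩ Fᶜ)| + |μ' (B2 i ∩ W j ∩ Fᶜ)| := habs _ _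
    have hchain : |(μ (B2 i) - μ' (B2 i)) - (μ (B2 i ∩ W j ∩ F) - μ' (B2 i ∩ W j ∩ F))
        + (μ (B1 i ∩ W j ∩ F) - μ' (B1 i ∩ W j ∩ F))
        + (μ (B1 i ∩ W j ∩ Fᶜ) - μ' (B1 i ∩ W j ∩ Fᶜ))
        - (μ (B2 i ∩ W j ∩ Fᶜ) - μ' (B2 i ∩ W j ∩ Fᶜ))|
        ≤ |μ (B2 i) - μ' (B2 i)| + |μ (B2 i ∩ W j ∩ F) - μ' (B2 i ∩ W j ∩ F)|
          + |μ (B1 i ∩ W j ∩ F) - μ' (B1 i ∩ W j ∩ F)|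
          + |μ (B1 i ∩ W j ∩ Fᶜ) - μ' (B1 i ∩ W j ∩ Fᶜ)|
          + |μ (B2 i ∩ W j ∩ Fᶜ) - μ' (B2 i ∩ W j ∩ Fᶜ)| := by
      calc _ ≤ |(μ (B2 i) - μ' (B2 i)) - (μ (B2 i ∩ W j ∩ F) - μ' (B2 i ∩ W j ∩ F))
            + (μ (B1 i ∩ W j ∩ F) - μ' (B1 i ∩ W j ∩ F))
            + (μ (B1 i ∩ W j ∩ Fᶜ) - μ' (B1 i ∩ W j ∩ Fᶜ))|
          + |μ (B2 i ∩ W j ∩ Fᶜ) - μ' (B2 i ∩ W j ∩ Fᶜ)| := habs _ _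
      _ ≤ |(μ (B2 i) - μ' (B2 i)) - (μ (B2 i ∩ W j ∩ F) - μ' (B2 i ∩ W j ∩ F))
            + (μ (B1 i ∩ W j ∩ F) - μ' (B1 i ∩ W j ∩ F))|
          + |μ (B1 i ∩ W j ∩ Fᶜ) - μ' (B1 i ∩ W j ∩ Fᶜ)|
          + |μ (B2 i ∩ W j ∩ Fᶜ) - μ' (B2 i ∩ W j ∩ Fᶜ)| := by
        have := abs_add_le ((μ (B2 i) - μ' (B2 i)) - (μ (B2 i ∩ W j ∩ F) - μ' (B2 i ∩ W j ∩ F))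
            + (μ (B1 i ∩ W j ∩ F) - μ' (B1 i ∩ W j ∩ F)))
          ((μ (B1 i ∩ W j ∩ Fᶜ) - μ' (B1 i ∩ W j ∩ Fᶜ)))
        linarith
      _ ≤ |(μ (B2 i) - μ' (B2 i)) - (μ (B2 i ∩ W j ∩ F) - μ' (B2 i ∩ W j ∩ F))|
          + |μ (B1 i ∩ W j ∩ F) - μ' (B1 i ∩ W j ∩ F)|
          + |μ (B1 i ∩ W j ∩ Fᶜ) - μ' (B1 i ∩ W j ∩ Fᶜ)|
          + |μ (B2 i ∩ W j ∩ Fᶜ) - μ' (B2 i ∩ W j ∩ Fᶜ)| := by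
        have := abs_add_le ((μ (B2 i) - μ' (B2 i)) - (μ (B2 i ∩ W j ∩ F) - μ' (B2 i ∩ W j ∩ F)))
          ((μ (B1 i ∩ W j ∩ F) - μ' (B1 i ∩ W j ∩ F)))
        linarith
      _ ≤ _ := by
        have := habs (μ (B2 i) - μ' (B2 i)) (μ (B2 i ∩ W j ∩ F) - μ' (B2 i ∩ W j ∩ F))
        linarith
    have hlast : |μ (B1 i ∩ W j ∩ Fᶜ) - μ' (B1 i ∩ W j ∩ Fᶜ)|
        + |μ (B2 i ∩ W j ∩ Fᶜ) - μ' (B2 i ∩ W j ∩ Fᶜ)| < ε₀/2 := by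
      have := lt_of_le_of_lt hterm hj
      linarith [abs_nonneg (μ (B1 i ∩ W j ∩ Fᶜ)), abs_nonneg (μ' (B1 i ∩ W j ∩ Fᶜ)),
        abs_nonneg (μ (B2 i ∩ W j ∩ Fᶜ)), abs_nonneg (μ' (B2 i ∩ W j ∩ Fᶜ))]
    linarith
  linarith [le_trans hi (le_of_lt hfinal)]
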